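/- In the Noumi representation acting on Laurent polynomials, the operator T_0-hat = t_0^{1/2} - t_0^{-1/2} ((z - a)(z - b)/z) ∂_0, where ∂_0 f(z) = (f(z) - f(q z^{-1})) / (z - q z^{-1}) and t_0 = -q^{-1} a b, satisfies the quadratic Hecke relation T_0-hat - T_0-hat^{-1} = t_0^{1/2} - t_0^{-1/2}, equivalently (T_0-hat - t_0^{1/2})(T_0-hat + t_0^{-1/2}) = 0. -/

import Mathlib

noncomputable section

/-- The Noumi-representation boundary operator
`T̂₀ = t₀^{1/2} - t₀^{-1/2} ((z-a)(z-b)/z) ∂₀`, with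
`∂₀ f (z) = (f z - f (q z⁻¹)) / (z - q z⁻¹)` and `u = t₀^{1/2}`,
acting (pointwise) on functions of one variable. -/
def T0hat {F : Type*} [Field F] (q a b u : F) (f : F → F) (z : F) : F :=
  u * f z - u⁻¹ * ((z - a) * (z - b) / z) * ((f z - f (q * z⁻¹)) / (z - q * z⁻¹))

/-- `T̂₀` satisfies the quadratic Hecke relation
`T̂₀ - T̂₀⁻¹ = t₀^{1/2} - t₀^{-1/2}`, i.e. `T̂₀² - (t₀^{1/2} - t₀^{-1/2}) T̂₀ - 1 = 0`
(equivalently `(T̂₀ - t₀^{1/2})(T̂₀ + t₀^{-1/2}) = 0`), where `u² = t₀ = -q⁻¹ab`. -/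
theorem statement10 {F : Type*} [Field F] (q a b u : F)
    (hq : q ≠ 0) (ha : a ≠ 0) (hb : b ≠ 0)
    (hu : u ^ 2 = -q⁻¹ * a * b) (hu0 : u ≠ 0) :
    ∀ (f : F → F) (z : F), z ≠ 0 → z ^ 2 ≠ q →
      T0hat q a b u (T0hat q a b u f) z - (u - u⁻¹) * T0hat q a b u f z - f z = 0 := by
  intro f z hz hzq
  obtain ⟨w, hw⟩ : ∃ w, w = q * z⁻¹ := ⟨_, rfl⟩
  have hw0 : w ≠ 0 := hw ▸ mul_ne_zero hq (inv_ne_zero hz)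
  have h3 : q * w⁻¹ = z := by rw [hw]; field_simp
  have h2 : z - w ≠ 0 := by
    rw [sub_ne_zero, hw]
    intro h
    apply hzq
    field_simp at h
    rw [← h]
  have h4 : w - z ≠ 0 := by
    intro h; apply h2; rw [← neg_sub, neg_eq_zero] at h; exact h
  set c1 : F := u⁻¹ * ((z - a) * (z - b) / z) / (z - w) with hc1
  set c2 : F := u⁻¹ * ((w - a) * (w - b) / w) / (w - z) with hc2
  have hTz : ∀ g : F → F, T0hat q a b u g z = u * g z - c1 * (g z - g w) := by
    intro g
    rw [T0hat, ← hw, hc1]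
    ring
  have hTw : ∀ g : F → F, T0hat q a b u g w = u * g w - c2 * (g w - g z) := by
    intro g
    rw [T0hat, h3, hc2]
    ring
  have huinv : u * u⁻¹ = 1 := mul_inv_cancel₀ hu0
  have hkey : c1 + c2 = u + u⁻¹ := by
    have hwz : w * z = q := by rw [hw]; field_simp
    rw [hc1, hc2]
    have huq : u ^ 2 * q = -(a * b) := by
      rw [hu]; field_simp
    field_simp
    linear_combination ((z - w) ^ 2) * huq + (u ^ 2 * (z - w) ^ 2) * hwz
  rw [hTz (T0hat q a b u f), hTz f, hTw f]
  linear_combination (c1 * (f z - f w)) * hkey + (f z) * huinv
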